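/- Let λ : ℕ → ℝ be summable with λ(n) > 0 for all n, and suppose there is C > 0 with ∑_{m=0}^{n} λ(m)·λ(n-m) ≤ C·λ(n) for all n (λ is subconvolutive). Let k : ℕ → ℝ with k(j) > 0, and set ν(I) = (I!/|I|!)·λ(|I|)⁻¹·∏_j k(j)^(2·I(j)) for each multi-index I. Then there exists a constant C' > 0 such that: for all a, b : (ℕ →₀ ℕ) → ℂ with A := ∑'_I |a(I)|²·ν(I) < ∞ and B := ∑'_I |b(I)|²·ν(I) < ∞, the coefficients c(I) = ∑_{J ≤ I} a(J)·b(I - J) (a finite sum over the multi-indices J with J(j) ≤ I(j) for all j) satisfy ∑'_I |c(I)|²·ν(I) ≤ C'·A·B. -/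

import Mathlib

open scoped BigOperators

/-- The degree `|I| = ∑_j I j` of a multi-index. -/
noncomputable def mdeg (I : ℕ →₀ ℕ) : ℕ := I.sum fun _ n => n

/-- The factorial `I! = ∏_j (I j)!` of a multi-index. -/
noncomputable def mfact (I : ℕ →₀ ℕ) : ℕ := I.prod fun _ n => n.factorial

/-- The weight `ν(I) = (I!/|I|!)·λ(|I|)⁻¹·∏_j k(j)^(2·I(j))`. -/
noncomputable def nuwt (lam : ℕ → ℝ) (k : ℕ → ℝ) (I : ℕ →₀ ℕ) : ℝ :=
  ((mfact I : ℝ) / (Nat.factorial (mdeg I) : ℝ)) * (lam (mdeg I))⁻¹ *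
    ∏ j ∈ I.support, k j ^ (2 * I j)

noncomputable def mchoose (I J : ℕ →₀ ℕ) : ℕ := ∏ j ∈ I.support, (I j).choose (J j)

lemma mdeg_add (I J : ℕ →₀ ℕ) : mdeg (I + J) = mdeg I + mdeg J := by
  simp [mdeg, Finsupp.sum_add_index']

lemma mdeg_single (a n : ℕ) : mdeg (Finsupp.single a n) = n := by
  simp [mdeg, Finsupp.sum_single_index]

lemma mdeg_zero : mdeg (0 : ℕ →₀ ℕ) = 0 := by simp [mdeg]

lemma mdeg_tsub {J I : ℕ →₀ ℕ} (h : J ≤ I) : mdeg (I - J) = mdeg I - mdeg J := by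
  have h1 : J + (I - J) = I := add_tsub_cancel_of_le h
  have h2 : mdeg (J + (I - J)) = mdeg I := by rw [h1]
  rw [mdeg_add] at h2
  omega

lemma mdeg_le {J I : ℕ →₀ ℕ} (h : J ≤ I) : mdeg J ≤ mdeg I := by
  have h1 : J + (I - J) = I := add_tsub_cancel_of_le h
  have h2 : mdeg (J + (I - J)) = mdeg I := by rw [h1]
  rw [mdeg_add] at h2
  omega

lemma sum_Iic_single_add {M : Type*} [AddCommMonoid M] (I : ℕ →₀ ℕ) (a n : ℕ)
    (ha : a ∉ I.support) (f : (ℕ →₀ ℕ) → M) :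
    ∑ J ∈ Finset.Iic (Finsupp.single a n + I), f J
      = ∑ t ∈ Finset.range (n + 1), ∑ J ∈ Finset.Iic I, f (Finsupp.single a t + J) := by
  have hIa : I a = 0 := Finsupp.notMem_support_iff.mp ha
  rw [← Finset.sum_product']
  refine Finset.sum_bij' (fun J _ => ((J a : ℕ), J.erase a))
    (fun p _ => Finsupp.single a p.1 + p.2) ?_ ?_ ?_ ?_ ?_
  · intro J hJ
    rw [Finset.mem_Iic] at hJ
    rw [Finset.mem_product, Finset.mem_range, Finset.mem_Iic]
    dsimp only
    constructor
    · have := hJ a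
      simp [hIa, Finsupp.single_apply] at this
      omega
    · intro b
      by_cases hb : b = a
      · simp [hb]
      · have := hJ b
        simpa [Finsupp.erase_ne hb, Finsupp.single_apply, (Ne.symm hb : a ≠ b)] using this
  · intro p hp
    rw [Finset.mem_product, Finset.mem_range, Finset.mem_Iic] at hp
    rw [Finset.mem_Iic]
    intro b
    simp only [Finsupp.add_apply, Finsupp.single_apply]
    by_cases hb : a = b
    · subst hb
      have h2 := hp.2 a
      have h1 := hp.1
      simp [hIa] at h2 ⊢
      omega
    · have := hp.2 b
      simp [hb]
      omega
  · intro J hJ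
    exact Finsupp.single_add_erase a J
  · intro p hp
    rw [Finset.mem_product, Finset.mem_range, Finset.mem_Iic] at hp
    have hp2a : p.2 a = 0 := Nat.le_zero.mp (hIa ▸ hp.2 a)
    ext1
    · simp [Finsupp.add_apply, Finsupp.single_apply, hp2a]
    · ext b
      by_cases hb : b = a
      · subst hb
        simp [Finsupp.erase_same, hp2a]
      · simp [Finsupp.erase_ne hb, Finsupp.single_apply, (Ne.symm hb : a ≠ b)]
  · intro J hJ
    rw [Finsupp.single_add_erase]

lemma vander2 (n n' : ℕ) (g : ℕ → ℝ) :
    ∑ t ∈ Finset.range (n+1), ∑ m ∈ Finset.range (n'+1),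
      ((n.choose t : ℝ) * (n'.choose m : ℝ)) * g (t+m)
    = ∑ s ∈ Finset.range (n+n'+1), ((n+n').choose s : ℝ) * g s := by
  have hrhs : ∀ s, ((n+n').choose s : ℝ) * g s
      = ∑ p ∈ Finset.HasAntidiagonal.antidiagonal s,
          ((n.choose p.1 : ℝ) * (n'.choose p.2 : ℝ)) * g (p.1 + p.2) := by
    intro s
    rw [Nat.add_choose_eq]
    push_cast
    rw [Finset.sum_mul]
    refine Finset.sum_congr rfl fun p hp => ?_
    rw [Finset.HasAntidiagonal.mem_antidiagonal] at hp
    rw [hp]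
  simp_rw [hrhs]
  rw [← Finset.sum_product']
  have hdisj : ∀ x ∈ (Finset.range (n+n'+1) : Finset ℕ), ∀ y ∈ Finset.range (n+n'+1),
      x ≠ y → Disjoint (Finset.HasAntidiagonal.antidiagonal x) (Finset.HasAntidiagonal.antidiagonal y) := by
    intro x _ y _ hxy
    rw [Finset.disjoint_left]
    intro p hpx hpy
    rw [Finset.HasAntidiagonal.mem_antidiagonal] at hpx hpy
    exact hxy (hpx ▸ hpy)
  rw [← Finset.sum_biUnion hdisj]
  refine Finset.sum_subset ?_ ?_
  · intro p hp
    rw [Finset.mem_product, Finset.mem_range, Finset.mem_range] at hp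
    rw [Finset.mem_biUnion]
    exact ⟨p.1 + p.2, Finset.mem_range.mpr (by omega), Finset.HasAntidiagonal.mem_antidiagonal.mpr rfl⟩
  · intro p _ hp
    rw [Finset.mem_product, Finset.mem_range, Finset.mem_range] at hp
    push_neg at hp
    by_cases h1 : p.1 < n + 1
    · have h2 : n' < p.2 := by have := hp h1; omega
      rw [Nat.choose_eq_zero_of_lt h2]
      simp
    · rw [Nat.choose_eq_zero_of_lt (by omega : n < p.1)]
      simp

lemma vander (I : ℕ →₀ ℕ) (g : ℕ → ℝ) :
    ∑ J ∈ Finset.Iic I, (mchoose I J : ℝ) * g (mdeg J)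
      = ∑ m ∈ Finset.range (mdeg I + 1), ((mdeg I).choose m : ℝ) * g m := by
  induction I using Finsupp.induction generalizing g with
  | zero =>
    have : Finset.Iic (0 : ℕ →₀ ℕ) = {0} := by
      ext J; simp [Finset.mem_Iic, le_zero_iff]
    simp [this, mchoose, mdeg_zero]
  | single_add a n I han hn IH =>
    rw [sum_Iic_single_add I a n han]
    have hIa : I a = 0 := Finsupp.notMem_support_iff.mp han
    have hsupp : (Finsupp.single a n + I).support = insert a I.support := by
      rw [Finsupp.support_add_eq, Finsupp.support_single_ne_zero a hn]
      · ext x; simp [or_comm]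
      · rw [Finsupp.support_single_ne_zero a hn, Finset.disjoint_singleton_left]
        exact han
    have hmc : ∀ t ∈ Finset.range (n+1), ∀ J ∈ Finset.Iic I,
        mchoose (Finsupp.single a n + I) (Finsupp.single a t + J)
          = n.choose t * mchoose I J := by
      intro t _ J hJ
      rw [Finset.mem_Iic] at hJ
      have hJa : J a = 0 := Nat.le_zero.mp (hIa ▸ hJ a)
      rw [mchoose, hsupp, Finset.prod_insert han]
      congr 1
      · simp [hIa, hJa, Finsupp.single_apply]
      · refine Finset.prod_congr rfl fun j hj => ?_
        have hja : a ≠ j := fun h => han (h ▸ hj)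
        simp [Finsupp.single_apply, hja]
    have hmd : ∀ t, ∀ J, mdeg (Finsupp.single a t + J) = t + mdeg J := by
      intro t J; rw [mdeg_add, mdeg_single]
    calc ∑ t ∈ Finset.range (n+1), ∑ J ∈ Finset.Iic I,
          (mchoose (Finsupp.single a n + I) (Finsupp.single a t + J) : ℝ)
            * g (mdeg (Finsupp.single a t + J))
        = ∑ t ∈ Finset.range (n+1), ∑ m ∈ Finset.range (mdeg I + 1),
            ((n.choose t : ℝ) * ((mdeg I).choose m : ℝ)) * g (t + m) := by
          refine Finset.sum_congr rfl fun t ht => ?_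
          rw [show ∑ J ∈ Finset.Iic I,
              (mchoose (Finsupp.single a n + I) (Finsupp.single a t + J) : ℝ)
                * g (mdeg (Finsupp.single a t + J))
              = ∑ J ∈ Finset.Iic I, (n.choose t : ℝ)
                  * ((mchoose I J : ℝ) * g (t + mdeg J)) from
            Finset.sum_congr rfl fun J hJ => by
              rw [hmc t ht J hJ, hmd t J]; push_cast; ring]
          rw [← Finset.mul_sum, IH (fun m => g (t + m)), Finset.mul_sum]
          refine Finset.sum_congr rfl fun m _ => ?_
          ring
      _ = ∑ s ∈ Finset.range (n + mdeg I + 1), (((n + mdeg I).choose s : ℝ)) * g s :=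
          vander2 n (mdeg I) g
      _ = ∑ m ∈ Finset.range (mdeg (Finsupp.single a n + I) + 1),
            ((mdeg (Finsupp.single a n + I)).choose m : ℝ) * g m := by
          rw [mdeg_add, mdeg_single]

lemma mfact_factor {J I : ℕ →₀ ℕ} (h : J ≤ I) :
    mfact I = mchoose I J * (mfact J * mfact (I - J)) := by
  have hJs : J.support ⊆ I.support := Finsupp.support_mono h
  have hKs : (I - J).support ⊆ I.support := Finsupp.support_mono tsub_le_self
  rw [mfact, mfact, mfact, Finsupp.prod_of_support_subset J hJs _ (by simp),
    Finsupp.prod_of_support_subset (I - J) hKs _ (by simp), mchoose,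
    Finsupp.prod_of_support_subset I subset_rfl _ (by simp)]
  rw [← Finset.prod_mul_distrib, ← Finset.prod_mul_distrib]
  refine Finset.prod_congr rfl fun j _ => ?_
  rw [Finsupp.tsub_apply, ← mul_assoc]
  exact (Nat.choose_mul_factorial_mul_factorial (h j)).symm

lemma kprod_factor (k : ℕ → ℝ) {J I : ℕ →₀ ℕ} (h : J ≤ I) :
    ∏ j ∈ I.support, k j ^ (2 * I j)
      = (∏ j ∈ J.support, k j ^ (2 * J j)) * ∏ j ∈ (I - J).support, k j ^ (2 * (I - J) j) := by
  have key : ∀ F G : ℕ →₀ ℕ, ∏ j ∈ (F + G).support, k j ^ (2 * (F + G) j)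
      = (∏ j ∈ F.support, k j ^ (2 * F j)) * ∏ j ∈ G.support, k j ^ (2 * G j) := by
    intro F G
    exact Finsupp.prod_add_index' (f := F) (g := G) (h := fun j n => k j ^ (2 * n))
      (fun a => by simp) (fun a b₁ b₂ => by simp [mul_add, pow_add])
  have h1 : J + (I - J) = I := add_tsub_cancel_of_le h
  conv_lhs => rw [← h1, key J (I - J)]

lemma mfact_pos (I : ℕ →₀ ℕ) : 0 < mfact I :=
  Finset.prod_pos fun j _ => Nat.factorial_pos _

lemma nuwt_pos {lam k : ℕ → ℝ} (hlam : ∀ n, 0 < lam n) (hk : ∀ j, 0 < k j) (I : ℕ →₀ ℕ) :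
    0 < nuwt lam k I := by
  refine mul_pos (mul_pos (div_pos ?_ ?_) (inv_pos.mpr (hlam _))) ?_
  · exact_mod_cast mfact_pos I
  · exact_mod_cast Nat.factorial_pos _
  · exact Finset.prod_pos fun j _ => pow_pos (hk j) _

lemma mchoose_pos {J I : ℕ →₀ ℕ} (h : J ≤ I) : 0 < mchoose I J :=
  Finset.prod_pos fun j _ => Nat.choose_pos (h j)

lemma nuwt_factor {lam k : ℕ → ℝ} (hlam : ∀ n, 0 < lam n) {J I : ℕ →₀ ℕ} (h : J ≤ I) :
    nuwt lam k I = nuwt lam k J * nuwt lam k (I - J) *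
      ((mchoose I J : ℝ) * (lam (mdeg J) * lam (mdeg (I - J)))
        / (((mdeg I).choose (mdeg J) : ℝ) * lam (mdeg I))) := by
  have hm : mdeg J ≤ mdeg I := mdeg_le h
  have hdeg : mdeg J + mdeg (I - J) = mdeg I := by
    have := mdeg_tsub h; omega
  have e1 : (mfact I : ℝ) = (mchoose I J : ℝ) * ((mfact J : ℝ) * (mfact (I - J) : ℝ)) := by
    exact_mod_cast congrArg (Nat.cast (R := ℝ)) (mfact_factor h)
  have e2 : ((Nat.factorial (mdeg I) : ℕ) : ℝ)
      = ((mdeg I).choose (mdeg J) : ℝ) * ((mdeg J).factorial : ℝ)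
          * ((mdeg (I - J)).factorial : ℝ) := by
    have := Nat.choose_mul_factorial_mul_factorial hm
    rw [mdeg_tsub h]
    exact_mod_cast congrArg (Nat.cast (R := ℝ)) this.symm
  rw [nuwt, nuwt, nuwt, kprod_factor k h, e1, e2]
  have h1 : lam (mdeg I) ≠ 0 := (hlam _).ne'
  have h2 : lam (mdeg J) ≠ 0 := (hlam _).ne'
  have h3 : lam (mdeg (I - J)) ≠ 0 := (hlam _).ne'
  have h4 : ((mdeg J).factorial : ℝ) ≠ 0 := by exact_mod_cast (Nat.factorial_pos _).ne'
  have h5 : ((mdeg (I - J)).factorial : ℝ) ≠ 0 := by exact_mod_cast (Nat.factorial_pos _).ne'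
  have h6 : (((mdeg I).choose (mdeg J) : ℕ) : ℝ) ≠ 0 := by
    exact_mod_cast (Nat.choose_pos hm).ne'
  field_simp

open scoped ENNReal

theorem stmt9 (lam : ℕ → ℝ) (hlam_sum : Summable lam) (hlam_pos : ∀ n, 0 < lam n)
    (C : ℝ) (hC : 0 < C)
    (hconv : ∀ n : ℕ, ∑ m ∈ Finset.range (n + 1), lam m * lam (n - m) ≤ C * lam n)
    (k : ℕ → ℝ) (hk : ∀ j, 0 < k j) :
    ∃ C' : ℝ, 0 < C' ∧
      ∀ a b : (ℕ →₀ ℕ) → ℂ,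
        Summable (fun I => ‖a I‖ ^ 2 * nuwt lam k I) →
        Summable (fun I => ‖b I‖ ^ 2 * nuwt lam k I) →
        Summable (fun I : ℕ →₀ ℕ =>
          ‖∑ J ∈ Finset.Iic I, a J * b (I - J)‖ ^ 2 * nuwt lam k I) ∧
        ∑' I : ℕ →₀ ℕ, ‖∑ J ∈ Finset.Iic I, a J * b (I - J)‖ ^ 2 * nuwt lam k I ≤
          C' * (∑' I, ‖a I‖ ^ 2 * nuwt lam k I) * (∑' I, ‖b I‖ ^ 2 * nuwt lam k I) := by
  refine ⟨C, hC, fun a b hA hB => ?_⟩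
  set ν : (ℕ →₀ ℕ) → ℝ := nuwt lam k with hν
  have hνpos : ∀ I, 0 < ν I := nuwt_pos hlam_pos hk
  set F : (ℕ →₀ ℕ) → ℝ := fun I => ‖a I‖ ^ 2 * ν I with hF
  set G : (ℕ →₀ ℕ) → ℝ := fun I => ‖b I‖ ^ 2 * ν I with hG
  have hFnn : ∀ I, 0 ≤ F I := fun I => mul_nonneg (sq_nonneg _) (hνpos I).le
  have hGnn : ∀ I, 0 ≤ G I := fun I => mul_nonneg (sq_nonneg _) (hνpos I).le
  -- the `r` weights
  set r : (ℕ →₀ ℕ) → (ℕ →₀ ℕ) → ℝ := fun I J =>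
    (mchoose I J : ℝ) * (lam (mdeg J) * lam (mdeg (I - J))
      / (((mdeg I).choose (mdeg J) : ℝ) * lam (mdeg I))) with hr
  have hrpos : ∀ I J, J ≤ I → 0 < r I J := by
    intro I J hJ
    have h1 : (0:ℝ) < mchoose I J := by exact_mod_cast mchoose_pos hJ
    have h2 : (0:ℝ) < ((mdeg I).choose (mdeg J) : ℝ) := by
      exact_mod_cast Nat.choose_pos (mdeg_le hJ)
    exact mul_pos h1 (div_pos (mul_pos (hlam_pos _) (hlam_pos _))
      (mul_pos h2 (hlam_pos _)))
  -- sum of the weights is at most C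
  have hrsum : ∀ I : ℕ →₀ ℕ, ∑ J ∈ Finset.Iic I, r I J ≤ C := by
    intro I
    set n := mdeg I with hn
    have step1 : ∑ J ∈ Finset.Iic I, r I J
        = ∑ J ∈ Finset.Iic I, (mchoose I J : ℝ) *
            (fun m => lam m * lam (n - m) / ((n.choose m : ℝ) * lam n)) (mdeg J) := by
      refine Finset.sum_congr rfl fun J hJ => ?_
      rw [Finset.mem_Iic] at hJ
      rw [hr]
      simp only []
      rw [mdeg_tsub hJ]
    rw [step1, vander I (fun m => lam m * lam (n - m) / ((n.choose m : ℝ) * lam n))]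
    have step2 : ∑ m ∈ Finset.range (n + 1),
        ((n.choose m : ℝ)) * (lam m * lam (n - m) / ((n.choose m : ℝ) * lam n))
        = ∑ m ∈ Finset.range (n + 1), lam m * lam (n - m) / lam n := by
      refine Finset.sum_congr rfl fun m hm => ?_
      rw [Finset.mem_range] at hm
      have hc : ((n.choose m : ℕ) : ℝ) ≠ 0 := by
        exact_mod_cast (Nat.choose_pos (by omega : m ≤ n)).ne'
      rw [mul_div_assoc']
      exact mul_div_mul_left _ _ hc
    rw [step2, ← Finset.sum_div]
    rw [div_le_iff₀ (hlam_pos n)]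
    exact hconv n
  -- pointwise Cauchy-Schwarz bound
  have hpoint : ∀ I : ℕ →₀ ℕ,
      ‖∑ J ∈ Finset.Iic I, a J * b (I - J)‖ ^ 2 * ν I
        ≤ C * ∑ J ∈ Finset.Iic I, F J * G (I - J) := by
    intro I
    set c := ∑ J ∈ Finset.Iic I, a J * b (I - J) with hc
    have h1 : ‖c‖ ≤ ∑ J ∈ Finset.Iic I, ‖a J‖ * ‖b (I - J)‖ := by
      refine (norm_sum_le _ _).trans ?_
      refine Finset.sum_le_sum fun J _ => ?_
      rw [norm_mul]
    have h2 : ∀ J ∈ Finset.Iic I, ‖a J‖ * ‖b (I - J)‖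
        = Real.sqrt (r I J) * (Real.sqrt (ν J * ν (I - J) / ν I) * (‖a J‖ * ‖b (I - J)‖)) := by
      intro J hJ
      rw [Finset.mem_Iic] at hJ
      have hfac : ν I = ν J * ν (I - J) * r I J := by
        have h0 := nuwt_factor (k := k) hlam_pos hJ
        rw [hν, hr]
        rw [h0]
        ring
      have hprod : r I J * (ν J * ν (I - J) / ν I) = 1 := by
        have e1 : (0:ℝ) < ν J * ν (I - J) := mul_pos (hνpos J) (hνpos (I - J))
        have e2 : (0:ℝ) < r I J := hrpos I J hJ
        rw [hfac, div_mul_eq_div_div, div_self e1.ne', mul_one_div, div_self e2.ne']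
      have : Real.sqrt (r I J) * Real.sqrt (ν J * ν (I - J) / ν I) = 1 := by
        rw [← Real.sqrt_mul (hrpos I J hJ).le, hprod, Real.sqrt_one]
      rw [← mul_assoc, this, one_mul]
    have h3 : (∑ J ∈ Finset.Iic I, ‖a J‖ * ‖b (I - J)‖) ^ 2
        ≤ (∑ J ∈ Finset.Iic I, r I J) *
            ∑ J ∈ Finset.Iic I, (ν J * ν (I - J) / ν I) * (‖a J‖ * ‖b (I - J)‖) ^ 2 := by
      rw [Finset.sum_congr rfl h2]
      refine (Finset.sum_mul_sq_le_sq_mul_sq _ _ _).trans ?_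
      refine mul_le_mul ?_ ?_ (Finset.sum_nonneg fun J hJ => sq_nonneg _) ?_
      · refine Finset.sum_le_sum fun J hJ => ?_
        rw [Real.sq_sqrt (hrpos I J (Finset.mem_Iic.mp hJ)).le]
      · refine Finset.sum_le_sum fun J hJ => ?_
        rw [mul_pow, Real.sq_sqrt]
        exact div_nonneg (mul_nonneg (hνpos _).le (hνpos _).le) (hνpos I).le
      · exact Finset.sum_nonneg fun J hJ => (hrpos I J (Finset.mem_Iic.mp hJ)).le
    have h4 : ‖c‖ ^ 2 ≤ (∑ J ∈ Finset.Iic I, ‖a J‖ * ‖b (I - J)‖) ^ 2 := by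
      exact pow_le_pow_left₀ (norm_nonneg _) h1 2
    have h5 : (∑ J ∈ Finset.Iic I, (ν J * ν (I - J) / ν I) * (‖a J‖ * ‖b (I - J)‖) ^ 2) * ν I
        = ∑ J ∈ Finset.Iic I, F J * G (I - J) := by
      rw [Finset.sum_mul]
      refine Finset.sum_congr rfl fun J hJ => ?_
      rw [hF, hG]
      simp only []
      field_simp [(hνpos I).ne']
    calc ‖c‖ ^ 2 * ν I ≤ ((∑ J ∈ Finset.Iic I, r I J) *
            ∑ J ∈ Finset.Iic I, (ν J * ν (I - J) / ν I) * (‖a J‖ * ‖b (I - J)‖) ^ 2) * ν I := by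
          refine mul_le_mul_of_nonneg_right (h4.trans h3) (hνpos I).le
      _ = (∑ J ∈ Finset.Iic I, r I J) * ∑ J ∈ Finset.Iic I, F J * G (I - J) := by
          rw [mul_assoc, h5]
      _ ≤ C * ∑ J ∈ Finset.Iic I, F J * G (I - J) := by
          refine mul_le_mul_of_nonneg_right (hrsum I) ?_
          exact Finset.sum_nonneg fun J _ => mul_nonneg (hFnn _) (hGnn _)
  -- ENNReal machinery
  set φ : ℝ → ℝ≥0∞ := ENNReal.ofReal with hφ
  have key : ∀ u v : (ℕ →₀ ℕ) → ℝ≥0∞,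
      ∑' I : ℕ →₀ ℕ, ∑ J ∈ Finset.Iic I, u J * v (I - J)
        = (∑' J, u J) * (∑' K, v K) := by
    intro u v
    have hmem : ∀ p : (ℕ →₀ ℕ) × (ℕ →₀ ℕ), p.1 ∈ Finset.Iic (p.1 + p.2) :=
      fun p => Finset.mem_Iic.mpr le_self_add
    let e : ((ℕ →₀ ℕ) × (ℕ →₀ ℕ)) ≃ (Σ I : ℕ →₀ ℕ, {J : ℕ →₀ ℕ // J ∈ Finset.Iic I}) :=
      { toFun := fun p => ⟨p.1 + p.2, ⟨p.1, hmem p⟩⟩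
        invFun := fun q => (q.2.1, q.1 - q.2.1)
        left_inv := fun p => by simp
        right_inv := fun q => by
          obtain ⟨I, J, hJ⟩ := q
          have hle : J + (I - J) = I := add_tsub_cancel_of_le (Finset.mem_Iic.mp hJ)
          dsimp only
          refine Sigma.ext hle ?_
          refine (Subtype.heq_iff_coe_eq ?_).mpr rfl
          intro x
          dsimp only
          rw [hle] }
    have h1 : ∀ I : ℕ →₀ ℕ, ∑ J ∈ Finset.Iic I, u J * v (I - J)
        = ∑' J : {J : ℕ →₀ ℕ // J ∈ Finset.Iic I}, u J.1 * v (I - J.1) := by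
      intro I
      exact (Finset.tsum_subtype _ fun J => u J * v (I - J)).symm
    calc ∑' I : ℕ →₀ ℕ, ∑ J ∈ Finset.Iic I, u J * v (I - J)
        = ∑' I : ℕ →₀ ℕ, ∑' J : {J : ℕ →₀ ℕ // J ∈ Finset.Iic I}, u J.1 * v (I - J.1) := by
          exact tsum_congr h1
      _ = ∑' q : (Σ I : ℕ →₀ ℕ, {J : ℕ →₀ ℕ // J ∈ Finset.Iic I}), u q.2.1 * v (q.1 - q.2.1) :=
          (ENNReal.tsum_sigma _).symm
      _ = ∑' p : (ℕ →₀ ℕ) × (ℕ →₀ ℕ), u p.1 * v p.2 := by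
          rw [← Equiv.tsum_eq e (fun q => u q.2.1 * v (q.1 - q.2.1))]
          exact tsum_congr fun p => by simp [e, add_tsub_cancel_left]
      _ = (∑' J, u J) * (∑' K, v K) := by
          rw [ENNReal.tsum_prod' (f := fun p => u p.1 * v p.2)]
          simp only []
          rw [tsum_congr fun x => (ENNReal.tsum_mul_left :
            ∑' y, u x * v y = u x * ∑' y, v y), ENNReal.tsum_mul_right]
  have hAnn : (0:ℝ) ≤ ∑' I, F I := tsum_nonneg hFnn
  set cterm : (ℕ →₀ ℕ) → ℝ := fun I => ‖∑ J ∈ Finset.Iic I, a J * b (I - J)‖ ^ 2 * ν I with hct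
  have hctnn : ∀ I, 0 ≤ cterm I := fun I => mul_nonneg (sq_nonneg _) (hνpos I).le
  have hFsum : ∑' I, φ (F I) = φ (∑' I, F I) := (ENNReal.ofReal_tsum_of_nonneg hFnn hA).symm
  have hGsum : ∑' I, φ (G I) = φ (∑' I, G I) := (ENNReal.ofReal_tsum_of_nonneg hGnn hB).symm
  have hmain : ∑' I, φ (cterm I) ≤ φ C * (φ (∑' I, F I) * φ (∑' I, G I)) := by
    calc ∑' I, φ (cterm I) ≤ ∑' I, φ (C * ∑ J ∈ Finset.Iic I, F J * G (I - J)) :=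
          ENNReal.tsum_le_tsum fun I => ENNReal.ofReal_le_ofReal (hpoint I)
      _ = ∑' I, φ C * ∑ J ∈ Finset.Iic I, φ (F J) * φ (G (I - J)) := by
          refine tsum_congr fun I => ?_
          rw [hφ, ENNReal.ofReal_mul hC.le]
          congr 1
          rw [ENNReal.ofReal_sum_of_nonneg fun J _ => mul_nonneg (hFnn _) (hGnn _)]
          exact Finset.sum_congr rfl fun J _ => ENNReal.ofReal_mul (hFnn _)
      _ = φ C * ((∑' J, φ (F J)) * (∑' K, φ (G K))) := by
          rw [ENNReal.tsum_mul_left, key (fun J => φ (F J)) (fun K => φ (G K))]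
      _ = φ C * (φ (∑' I, F I) * φ (∑' I, G I)) := by rw [hFsum, hGsum]
  have htop : ∑' I, φ (cterm I) ≠ ⊤ := by
    refine ne_top_of_le_ne_top ?_ hmain
    rw [hφ]
    exact ENNReal.mul_ne_top ENNReal.ofReal_ne_top
      (ENNReal.mul_ne_top ENNReal.ofReal_ne_top ENNReal.ofReal_ne_top)
  have hsummable : Summable cterm := by
    have hs := ENNReal.summable_toReal htop
    refine hs.congr fun I => ?_
    rw [hφ, ENNReal.toReal_ofReal (hctnn I)]
  refine ⟨hsummable, ?_⟩
  have h6 : φ (∑' I, cterm I) = ∑' I, φ (cterm I) :=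
    ENNReal.ofReal_tsum_of_nonneg hctnn hsummable
  have h7 : φ (∑' I, cterm I) ≤ φ (C * ((∑' I, F I) * (∑' I, G I))) := by
    rw [hφ, ENNReal.ofReal_mul hC.le, ENNReal.ofReal_mul hAnn, ← hφ, h6]
    exact hmain
  have h8 : ∑' I, cterm I ≤ C * ((∑' I, F I) * (∑' I, G I)) := by
    rw [hφ] at h7
    exact (ENNReal.ofReal_le_ofReal_iff (mul_nonneg hC.le (mul_nonneg hAnn (tsum_nonneg hGnn)))).mp h7
  calc ∑' I, cterm I ≤ C * ((∑' I, F I) * (∑' I, G I)) := h8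
    _ = C * (∑' I, F I) * (∑' I, G I) := by ring
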